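/- Let F : ℝⁿ → ℝⁿ be C² and set A(u) := DG(u)⁻¹ · DF(u). Suppose there exists a differentiable entropy-flux function ψ : ℝⁿ → ℝ with ∇ψ(u)ᵀ = ∇η(u)ᵀ A(u) for all u ∈ ℝⁿ. Then for every u ∈ ℝⁿ the matrix N(u) is symmetric and satisfies the symmetrizer identity N(u) A(u) = A(u)ᵀ N(u). -/

import Mathlib

open Matrix

/-- The Jacobian matrix of a map `f : ℝⁿ → ℝⁿ` at a point `u`:
`(jacM f u) i j = ∂fᵢ/∂uⱼ (u)`. -/
noncomputable def jacM {ι : Type*} [Fintype ι] [DecidableEq ι]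
    (f : (ι → ℝ) → (ι → ℝ)) (u : ι → ℝ) : Matrix ι ι ℝ :=
  Matrix.of fun i j => fderiv ℝ f u (Pi.single j 1) i

/-- The gradient of a scalar function. -/
noncomputable def gradV {ι : Type*} [Fintype ι] [DecidableEq ι]
    (f : (ι → ℝ) → ℝ) (u : ι → ℝ) : ι → ℝ :=
  fun i => fderiv ℝ f u (Pi.single i 1)

/-- The Hessian matrix of a scalar function: `(hessM f u) j k = ∂²f/∂uⱼ∂u_k (u)`. -/
noncomputable def hessM {ι : Type*} [Fintype ι] [DecidableEq ι]
    (f : (ι → ℝ) → ℝ) (u : ι → ℝ) : Matrix ι ι ℝ :=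
  Matrix.of fun j k => fderiv ℝ (fun x => fderiv ℝ f x (Pi.single k 1)) u (Pi.single j 1)

/-- Second partial derivatives of a vector-valued map:
`hess2 f u i j k = ∂²fᵢ/∂uⱼ∂u_k (u)`. -/
noncomputable def hess2 {ι : Type*} [Fintype ι] [DecidableEq ι]
    (f : (ι → ℝ) → (ι → ℝ)) (u : ι → ℝ) (i j k : ι) : ℝ :=
  fderiv ℝ (fun x => fderiv ℝ f x (Pi.single k 1) i) u (Pi.single j 1)

/-- The candidate symmetrizer
`N(u)_{jk} = ∂²η/∂uⱼ∂u_k(u) − Σ_{i,i'} ∂η/∂uᵢ(u) (DG(u)⁻¹)_{ii'} ∂²G_{i'}/∂uⱼ∂u_k(u)`. -/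
noncomputable def symmN {ι : Type*} [Fintype ι] [DecidableEq ι]
    (G : (ι → ℝ) → (ι → ℝ)) (η : (ι → ℝ) → ℝ) (u : ι → ℝ) : Matrix ι ι ℝ :=
  Matrix.of fun j k =>
    hessM η u j k - ∑ i : ι, ∑ i' : ι, gradV η u i * (jacM G u)⁻¹ i i' * hess2 G u i' j k


section Aux

variable {ι : Type*} [Fintype ι] [DecidableEq ι]

private lemma vec_eq_sum_single (v : ι → ℝ) :
    v = ∑ j, v j • (Pi.single j 1 : ι → ℝ) := by
  funext m
  simp [Finset.sum_apply, Pi.single_apply, mul_ite]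

/-- Symmetry of the second derivative for scalar functions on `ι → ℝ`,
under the minimal hypotheses we need. -/
private lemma sym_second {f : (ι → ℝ) → ℝ} {u : ι → ℝ}
    (hf : Differentiable ℝ f)
    (hg : ∀ j, DifferentiableAt ℝ (fun x => fderiv ℝ f x (Pi.single j 1)) u)
    (j k : ι) :
    fderiv ℝ (fun x => fderiv ℝ f x (Pi.single k 1)) u (Pi.single j 1) =
    fderiv ℝ (fun x => fderiv ℝ f x (Pi.single j 1)) u (Pi.single k 1) := by
  classical
  set g : (ι → ℝ) → (ι → ℝ) := fun x m => fderiv ℝ f x (Pi.single m 1) with hgdef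
  have hg' : DifferentiableAt ℝ g u := differentiableAt_pi.mpr hg
  set L : (ι → ℝ) →L[ℝ] ((ι → ℝ) →L[ℝ] ℝ) :=
    ∑ m, (ContinuousLinearMap.proj m (R := ℝ) (φ := fun _ : ι => ℝ)).smulRight
      (ContinuousLinearMap.proj m (R := ℝ) (φ := fun _ : ι => ℝ)) with hLdef
  have hLapp : ∀ (c w : ι → ℝ), L c w = ∑ m, c m * w m := by
    intro c w
    simp [hLdef, ContinuousLinearMap.sum_apply, smul_eq_mul]
  have hkey : ∀ x, fderiv ℝ f x = L (g x) := by
    intro x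
    ext v
    have hv := vec_eq_sum_single v
    conv_lhs => rw [hv]
    rw [map_sum]
    rw [hLapp]
    refine Finset.sum_congr rfl fun m _ => ?_
    rw [(fderiv ℝ f x).map_smul]
    simp [hgdef, smul_eq_mul, mul_comm]
  have hder : HasFDerivAt (fderiv ℝ f) (L.comp (fderiv ℝ g u)) u := by
    have h1 : HasFDerivAt (fun x => L (g x)) (L.comp (fderiv ℝ g u)) u :=
      L.hasFDerivAt.comp u hg'.hasFDerivAt
    have : (fderiv ℝ f) = fun x => L (g x) := funext hkey
    rw [this]
    exact h1
  have hsym := second_derivative_symmetric (fun y => (hf y).hasFDerivAt) hder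
      (Pi.single j 1) (Pi.single k 1)
  have happ : ∀ (a b : ι), (L.comp (fderiv ℝ g u)) (Pi.single a 1) (Pi.single b 1)
      = fderiv ℝ (fun x => fderiv ℝ f x (Pi.single b 1)) u (Pi.single a 1) := by
    intro a b
    have h2 : (L.comp (fderiv ℝ g u)) (Pi.single a 1) (Pi.single b 1)
        = ∑ m, (fderiv ℝ g u (Pi.single a 1)) m * (Pi.single b 1 : ι → ℝ) m := by
      rw [ContinuousLinearMap.comp_apply, hLapp]
    rw [h2]
    have h3 : ∑ m, (fderiv ℝ g u (Pi.single a 1)) m * (Pi.single b 1 : ι → ℝ) m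
        = (fderiv ℝ g u (Pi.single a 1)) b := by
      simp [Pi.single_apply, mul_ite]
    rw [h3]
    have h4 : fderiv ℝ g u = ContinuousLinearMap.pi fun m =>
        fderiv ℝ (fun x => fderiv ℝ f x (Pi.single m 1)) u := fderiv_pi hg
    rw [h4]
    rfl
  rw [happ j k, happ k j] at hsym
  exact hsym

private lemma diffAt_finset_prod {κ : Type*} {s : Finset κ} {f : κ → (ι → ℝ) → ℝ}
    {u : ι → ℝ} (h : ∀ i ∈ s, DifferentiableAt ℝ (f i) u) :
    DifferentiableAt ℝ (fun x => ∏ i ∈ s, f i x) u := by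
  classical
  induction s using Finset.induction with
  | empty => simpa using differentiableAt_const (1 : ℝ)
  | @insert a s ha ih =>
    simp only [Finset.prod_insert ha]
    exact (h a (Finset.mem_insert_self a s)).mul
      (ih fun i hi => h i (Finset.mem_insert_of_mem hi))

private lemma diffAt_det {M : (ι → ℝ) → Matrix ι ι ℝ} {u : ι → ℝ}
    (h : ∀ i j, DifferentiableAt ℝ (fun x => M x i j) u) :
    DifferentiableAt ℝ (fun x => (M x).det) u := by
  classical
  simp only [Matrix.det_apply']
  exact DifferentiableAt.fun_sum fun σ _ =>
    ((diffAt_finset_prod fun i _ => h (σ i) i).const_mul _)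

private lemma fderiv_sum_mul {κ : Type*} {s : Finset κ} {a b : κ → (ι → ℝ) → ℝ}
    {u : ι → ℝ} (ha : ∀ i ∈ s, DifferentiableAt ℝ (a i) u)
    (hb : ∀ i ∈ s, DifferentiableAt ℝ (b i) u) (w : ι → ℝ) :
    fderiv ℝ (fun x => ∑ i ∈ s, a i x * b i x) u w
      = ∑ i ∈ s, (fderiv ℝ (a i) u w * b i u + a i u * fderiv ℝ (b i) u w) := by
  rw [fderiv_fun_sum (A := fun i x => a i x * b i x) fun i hi => (ha i hi).mul (hb i hi), ContinuousLinearMap.sum_apply]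
  refine Finset.sum_congr rfl fun i hi => ?_
  rw [fderiv_fun_mul (ha i hi) (hb i hi)]
  simp only [ContinuousLinearMap.add_apply, ContinuousLinearMap.smul_apply, smul_eq_mul]
  ring

end Aux

/-- If `F` is `C²`, `A(u) = DG(u)⁻¹ · DF(u)`, and there is a differentiable
entropy-flux `ψ` with `∇ψ(u)ᵀ = ∇η(u)ᵀ A(u)` for all `u`, then for every `u` the matrix `N(u)`
is symmetric and `N(u) A(u) = A(u)ᵀ N(u)`. -/
theorem statement0 (n : ℕ) (hn : 1 ≤ n)
    (G F : (Fin n → ℝ) → (Fin n → ℝ)) (η : (Fin n → ℝ) → ℝ) (ψ : (Fin n → ℝ) → ℝ)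
    (hG : ContDiff ℝ 2 G) (hF : ContDiff ℝ 2 F) (hη : ContDiff ℝ 2 η)
    (hGinv : ∀ u, IsUnit (jacM G u).det)
    (hψ : Differentiable ℝ ψ)
    (hflux : ∀ u j, gradV ψ u j =
      ∑ i : Fin n, gradV η u i * ((jacM G u)⁻¹ * jacM F u) i j) :
    ∀ u : Fin n → ℝ,
      (symmN G η u).IsSymm ∧
      symmN G η u * ((jacM G u)⁻¹ * jacM F u) =
        ((jacM G u)⁻¹ * jacM F u)ᵀ * symmN G η u := by
  classical
  intro u
  -- basic differentiability of the Jacobian entries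
  have hGd : Differentiable ℝ G := hG.differentiable two_ne_zero
  have hFd : Differentiable ℝ F := hF.differentiable two_ne_zero
  have hone : (1 : WithTop ℕ∞) + 1 ≤ 2 := by norm_num
  have dJ : ∀ (H : (Fin n → ℝ) → (Fin n → ℝ)), ContDiff ℝ 2 H →
      ∀ (x : Fin n → ℝ) i j, DifferentiableAt ℝ (fun y => jacM H y i j) x := by
    intro H hH x i j
    have h1 : Differentiable ℝ (fderiv ℝ H) :=
      (hH.fderiv_right hone).differentiable one_ne_zero
    have h2 : DifferentiableAt ℝ
        (fun y => ((ContinuousLinearMap.proj i (R := ℝ) (φ := fun _ : Fin n => ℝ)).comp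
          (ContinuousLinearMap.apply ℝ (Fin n → ℝ) (Pi.single j 1))) (fderiv ℝ H y)) x :=
      (ContinuousLinearMap.differentiableAt _).comp x (h1 x)
    exact h2
  have dq : ∀ (x : Fin n → ℝ) i, DifferentiableAt ℝ (fun y => gradV η y i) x := by
    intro x i
    have h1 : Differentiable ℝ (fderiv ℝ η) :=
      (hη.fderiv_right hone).differentiable one_ne_zero
    have h2 : DifferentiableAt ℝ
        (fun y => (ContinuousLinearMap.apply ℝ ℝ (Pi.single i 1)) (fderiv ℝ η y)) x :=
      (ContinuousLinearMap.differentiableAt _).comp x (h1 x)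
    exact h2
  -- differentiability of the entries of the inverse Jacobian of G
  have dinv : ∀ (x : Fin n → ℝ) i i',
      DifferentiableAt ℝ (fun y => (jacM G y)⁻¹ i i') x := by
    intro x i i'
    have hrw : (fun y => (jacM G y)⁻¹ i i')
        = fun y => ((jacM G y).det)⁻¹ * (jacM G y).adjugate i i' := by
      funext y
      rw [Matrix.inv_def, Matrix.smul_apply, Ring.inverse_eq_inv, smul_eq_mul]
    rw [hrw]
    have hdet : DifferentiableAt ℝ (fun y => (jacM G y).det) x :=
      diffAt_det (fun a b => dJ G hG x a b)
    have hadj : DifferentiableAt ℝ (fun y => (jacM G y).adjugate i i') x := by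
      have hrw2 : (fun y => (jacM G y).adjugate i i')
          = fun y => ((jacM G y).updateRow i' (Pi.single i 1)).det := by
        funext y; rw [Matrix.adjugate_apply]
      rw [hrw2]
      refine diffAt_det (fun a b => ?_)
      by_cases hai : a = i'
      · simp only [hai, Matrix.updateRow_self]
        exact differentiableAt_const _
      · simp only [Matrix.updateRow_ne hai]
        exact dJ G hG x a b
    exact (hdet.inv (IsUnit.ne_zero (hGinv x))).mul hadj
  -- the auxiliary vector field p and its Jacobian P
  set p : (Fin n → ℝ) → Fin n → ℝ :=
    fun x i' => ∑ i, gradV η x i * (jacM G x)⁻¹ i i' with hp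
  set P : Matrix (Fin n) (Fin n) ℝ :=
    Matrix.of (fun i' k => fderiv ℝ (fun x => p x i') u (Pi.single k 1)) with hP
  have dp : ∀ (x : Fin n → ℝ) i', DifferentiableAt ℝ (fun y => p y i') x :=
    fun x i' => DifferentiableAt.fun_sum fun i _ => (dq x i).mul (dinv x i i')
  -- identity (E1):  ∑_{i'} p x i' * (DG x)_{i'j} = (∇η x)_j
  have hE1 : ∀ (x : Fin n → ℝ) j,
      (∑ i', p x i' * jacM G x i' j) = gradV η x j := by
    intro x j
    have h1 : ∀ i', p x i' * jacM G x i' j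
        = ∑ i, gradV η x i * ((jacM G x)⁻¹ i i' * jacM G x i' j) := by
      intro i'
      rw [hp, Finset.sum_mul]
      exact Finset.sum_congr rfl fun i _ => by ring
    simp_rw [h1]
    rw [Finset.sum_comm]
    have h2 : ∀ i, (∑ i', gradV η x i * ((jacM G x)⁻¹ i i' * jacM G x i' j))
        = gradV η x i * ((jacM G x)⁻¹ * jacM G x) i j := by
      intro i; rw [Matrix.mul_apply, Finset.mul_sum]
    simp_rw [h2, Matrix.nonsing_inv_mul _ (hGinv x), Matrix.one_apply]
    simp
  -- identity (E2):  (∇ψ x)_j = ∑_{i'} p x i' * (DF x)_{i'j}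
  have hE2 : ∀ (x : Fin n → ℝ) j,
      gradV ψ x j = ∑ i', p x i' * jacM F x i' j := by
    intro x j
    rw [hflux x j]
    have h1 : ∀ i, gradV η x i * ((jacM G x)⁻¹ * jacM F x) i j
        = ∑ i', gradV η x i * ((jacM G x)⁻¹ i i' * jacM F x i' j) := by
      intro i; rw [Matrix.mul_apply, Finset.mul_sum]
    simp_rw [h1]
    rw [Finset.sum_comm]
    refine Finset.sum_congr rfl fun i' _ => ?_
    rw [hp, Finset.sum_mul]
    exact Finset.sum_congr rfl fun i _ => by ring
  -- Clairaut for η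
  have hηsym : ∀ j k, hessM η u j k = hessM η u k j := by
    intro j k
    exact sym_second (hη.differentiable two_ne_zero) (fun m => dq u m) j k
  -- components of G and F are C², Clairaut for them
  have hcomp : ∀ (H : (Fin n → ℝ) → (Fin n → ℝ)), Differentiable ℝ H →
      ∀ (x : Fin n → ℝ) (v : Fin n → ℝ) i,
      fderiv ℝ (fun y => H y i) x v = fderiv ℝ H x v i := by
    intro H hH x v i
    have hdiff : ∀ m, DifferentiableAt ℝ (fun y => H y m) x := fun m =>
      ((ContinuousLinearMap.proj m (R := ℝ)
        (φ := fun _ : Fin n => ℝ)).differentiableAt).comp x (hH x)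
    have h4 : fderiv ℝ H x = ContinuousLinearMap.pi
        (fun m => fderiv ℝ (fun y => H y m) x) := fderiv_pi hdiff
    rw [h4]
    rfl
  have h2sym : ∀ (H : (Fin n → ℝ) → (Fin n → ℝ)), ContDiff ℝ 2 H →
      ∀ i j k, hess2 H u i j k = hess2 H u i k j := by
    intro H hH i j k
    have hHd : Differentiable ℝ H := hH.differentiable two_ne_zero
    have hfi : Differentiable ℝ (fun y => H y i) := by
      intro x
      exact ((ContinuousLinearMap.proj i (R := ℝ)
        (φ := fun _ : Fin n => ℝ)).differentiableAt).comp x (hHd x)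
    have hrw : ∀ (m : Fin n), (fun x => fderiv ℝ H x (Pi.single m 1) i)
        = fun x => fderiv ℝ (fun y => H y i) x (Pi.single m 1) := by
      intro m; funext x; rw [hcomp H hHd x _ i]
    have hgm : ∀ m, DifferentiableAt ℝ
        (fun x => fderiv ℝ (fun y => H y i) x (Pi.single m 1)) u := by
      intro m
      rw [← hrw m]
      exact dJ H hH u i m
    show fderiv ℝ (fun x => fderiv ℝ H x (Pi.single k 1) i) u (Pi.single j 1)
      = fderiv ℝ (fun x => fderiv ℝ H x (Pi.single j 1) i) u (Pi.single k 1)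
    rw [hrw k, hrw j]
    exact sym_second hfi hgm j k
  -- Clairaut for ψ, using the representation (E2)
  have hψsym : ∀ j k, fderiv ℝ (fun x => gradV ψ x j) u (Pi.single k 1)
      = fderiv ℝ (fun x => gradV ψ x k) u (Pi.single j 1) := by
    intro j k
    have hg : ∀ m, DifferentiableAt ℝ (fun x => fderiv ℝ ψ x (Pi.single m 1)) u := by
      intro m
      have : (fun x => fderiv ℝ ψ x (Pi.single m 1))
          = fun x => ∑ i', p x i' * jacM F x i' m := funext fun x => hE2 x m
      rw [this]
      exact DifferentiableAt.fun_sum fun i' _ => (dp u i').mul (dJ F hF u i' m)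
    exact sym_second hψ hg k j
  -- derivative of (E1):  ∑ (P_{i'k} G_{i'j} + p_{i'} G''_{i'kj}) = hessM η u k j
  have hD1 : ∀ j k, (∑ i', (P i' k * jacM G u i' j + p u i' * hess2 G u i' k j))
      = hessM η u k j := by
    intro j k
    have hfun : (fun x => ∑ i', p x i' * jacM G x i' j)
        = fun x => gradV η x j := funext fun x => hE1 x j
    have h1 := fderiv_sum_mul (a := fun i' x => p x i') (b := fun i' x => jacM G x i' j)
      (s := Finset.univ) (u := u) (fun i' _ => dp u i') (fun i' _ => dJ G hG u i' j)
      (Pi.single k 1)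
    rw [hfun] at h1
    exact h1.symm
  -- derivative of (E2)
  have hD2 : ∀ j k, fderiv ℝ (fun x => gradV ψ x j) u (Pi.single k 1)
      = ∑ i', (P i' k * jacM F u i' j + p u i' * hess2 F u i' k j) := by
    intro j k
    have hfun : (fun x => gradV ψ x j)
        = fun x => ∑ i', p x i' * jacM F x i' j := funext fun x => hE2 x j
    rw [hfun]
    exact fderiv_sum_mul (fun i' _ => dp u i') (fun i' _ => dJ F hF u i' j) (Pi.single k 1)
  -- symmetry of Fᵀ * P
  have hFP : ∀ j k, (∑ i', jacM F u i' j * P i' k) = ∑ i', jacM F u i' k * P i' j := by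
    intro j k
    have h1 := hψsym j k
    rw [hD2 j k, hD2 k j] at h1
    rw [Finset.sum_add_distrib, Finset.sum_add_distrib] at h1
    have h2 : (∑ i', p u i' * hess2 F u i' k j) = ∑ i', p u i' * hess2 F u i' j k :=
      Finset.sum_congr rfl fun i' _ => by rw [h2sym F hF i' k j]
    have h3 : (∑ i', P i' k * jacM F u i' j) = ∑ i', P i' j * jacM F u i' k := by
      rw [h2] at h1; exact add_right_cancel h1
    calc (∑ i', jacM F u i' j * P i' k) = ∑ i', P i' k * jacM F u i' j :=
          Finset.sum_congr rfl fun i' _ => mul_comm _ _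
      _ = ∑ i', P i' j * jacM F u i' k := h3
      _ = ∑ i', jacM F u i' k * P i' j := Finset.sum_congr rfl fun i' _ => mul_comm _ _
  -- N = Gᵀ * P
  have hNval : ∀ j k, symmN G η u j k
      = hessM η u j k - ∑ i', p u i' * hess2 G u i' j k := by
    intro j k
    show hessM η u j k - (∑ i, ∑ i', gradV η u i * (jacM G u)⁻¹ i i' * hess2 G u i' j k)
      = hessM η u j k - ∑ i', p u i' * hess2 G u i' j k
    congr 1
    rw [Finset.sum_comm]
    refine Finset.sum_congr rfl fun i' _ => ?_
    rw [hp, Finset.sum_mul]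
  have hH1 : symmN G η u = (jacM G u)ᵀ * P := by
    ext j k
    rw [Matrix.mul_apply]
    have h1 : (∑ i', (jacM G u)ᵀ j i' * P i' k) = ∑ i', P i' k * jacM G u i' j :=
      Finset.sum_congr rfl fun i' _ => by rw [Matrix.transpose_apply]; ring
    rw [h1]
    have h2 := hD1 j k
    rw [Finset.sum_add_distrib] at h2
    have h3 : (∑ i', P i' k * jacM G u i' j)
        = hessM η u k j - ∑ i', p u i' * hess2 G u i' k j := by linarith [h2]
    rw [hNval j k, h3, hηsym j k]
    congr 1
    exact Finset.sum_congr rfl fun i' _ => by rw [h2sym G hG i' j k]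
  -- symmetry of N
  have hNsym : (symmN G η u)ᵀ = symmN G η u := by
    ext j k
    rw [Matrix.transpose_apply, hNval j k, hNval k j, hηsym j k]
    congr 1
    exact Finset.sum_congr rfl fun i' _ => by rw [h2sym G hG i' j k]
  refine ⟨hNsym, ?_⟩
  -- final matrix algebra
  have hPtG : Pᵀ * jacM G u = symmN G η u := by
    rw [← hNsym, hH1, Matrix.transpose_mul, Matrix.transpose_transpose]
  have hS : ((jacM F u)ᵀ * P)ᵀ = (jacM F u)ᵀ * P := by
    ext j k
    rw [Matrix.transpose_apply, Matrix.mul_apply, Matrix.mul_apply]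
    calc (∑ i', (jacM F u)ᵀ k i' * P i' j) = ∑ i', jacM F u i' k * P i' j :=
          Finset.sum_congr rfl fun i' _ => by rw [Matrix.transpose_apply]
      _ = ∑ i', jacM F u i' j * P i' k := (hFP j k).symm
      _ = ∑ i', (jacM F u)ᵀ j i' * P i' k :=
          Finset.sum_congr rfl fun i' _ => by rw [Matrix.transpose_apply]
  calc symmN G η u * ((jacM G u)⁻¹ * jacM F u)
      = (Pᵀ * jacM G u) * ((jacM G u)⁻¹ * jacM F u) := by rw [hPtG]
    _ = Pᵀ * (jacM G u * (jacM G u)⁻¹) * jacM F u := by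
        rw [Matrix.mul_assoc, Matrix.mul_assoc, Matrix.mul_assoc]
    _ = Pᵀ * jacM F u := by
        rw [Matrix.mul_nonsing_inv _ (hGinv u), Matrix.mul_one]
    _ = ((jacM F u)ᵀ * P)ᵀ := by
        rw [Matrix.transpose_mul, Matrix.transpose_transpose]
    _ = (jacM F u)ᵀ * P := hS
    _ = ((jacM G u)⁻¹ * jacM F u)ᵀ * symmN G η u := by
        rw [hH1, Matrix.transpose_mul, Matrix.mul_assoc,
          ← Matrix.mul_assoc ((jacM G u)⁻¹)ᵀ, ← Matrix.transpose_mul,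
          Matrix.mul_nonsing_inv _ (hGinv u), Matrix.transpose_one, Matrix.one_mul]
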